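/- Let X be a sequence-form polytope and let A ∈ ℝ^{Σ×Σ} represent a linear map X → co X such that A has all nonnegative entries and, for every decision point j̃ ∈ J and every sequence σ ∈ Σ, there exists an action a ∈ A_{j̃} with A(σ, j̃a) = 0 (the canonical representation of Lemma 1 applied row-wise). Then there exists a matrix B ∈ ℝ^{J×J}_{≥0} such that the pair (A,B) satisfies the UTC constraint system: A(p_j, σ̃) + B(j, p_{σ̃}) = Σ_{a∈A_j} A(ja, σ̃) + Σ_{j̃∈C_{σ̃}} B(j, j̃) for all j ∈ J, σ̃ ∈ Σ; A(∅,∅) = 1; A(∅, σ̃) = 0 for σ̃ ≠ ∅; and A, B ≥ 0, where B(j, p_∅) := 0. -/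

import Mathlib

/-- A tree-form decision problem: sequences `Seq` (observation points, with root `∅`),
decision points `Dp`, where `seqs j` is the set of sequences `ja` for actions `a ∈ A_j`,
`parentSeq j = p_j`, `parentDp σ` the decision point immediately preceding `σ` (none for the root),
`children σ = C_σ`, and `depth` counts the number of decision points above a sequence. -/
structure TFDP where
  Seq : Type
  Dp : Type
  [finSeq : Fintype Seq]
  [decSeq : DecidableEq Seq]
  [finDp : Fintype Dp]
  [decDp : DecidableEq Dp]
  root : Seq
  seqs : Dp → Finset Seq
  parentSeq : Dp → Seq
  parentDp : Seq → Option Dp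
  children : Seq → Finset Dp
  depth : Seq → ℕ
  seqs_nonempty : ∀ j, (seqs j).Nonempty
  mem_children : ∀ σ j, j ∈ children σ ↔ parentSeq j = σ
  parentDp_spec : ∀ σ j, parentDp σ = some j ↔ σ ∈ seqs j
  parentDp_root : parentDp root = none
  depth_root : depth root = 0
  depth_seq : ∀ j, ∀ σ ∈ seqs j, depth σ = depth (parentSeq j) + 1

attribute [instance] TFDP.finSeq TFDP.decSeq TFDP.finDp TFDP.decDp

namespace TFDP

variable (T : TFDP)

/-- The sequence-form polytope `co X`. -/
def poly : Set (T.Seq → ℝ) :=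
  {x | (∀ σ, 0 ≤ x σ) ∧ x T.root = 1 ∧ ∀ j, x (T.parentSeq j) = ∑ σ ∈ T.seqs j, x σ}

/-- The pure (0/1) sequence-form strategies `X`. -/
def pureStrats : Set (T.Seq → ℝ) :=
  {x ∈ T.poly | ∀ σ, x σ = 0 ∨ x σ = 1}

/-- Matrix-vector multiplication for `Seq × Seq` matrices. -/
def mulVec (A : T.Seq → T.Seq → ℝ) (x : T.Seq → ℝ) : T.Seq → ℝ :=
  fun σ => ∑ σ' : T.Seq, A σ σ' * x σ'

/-- `B(j, p_σ)`, with the convention `B(j, p_∅) := 0`. -/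
def Bp (B : T.Dp → T.Dp → ℝ) (j : T.Dp) (σ : T.Seq) : ℝ :=
  (T.parentDp σ).elim 0 (B j)

/-- The UTC constraint system for a pair `(A, B)`. -/
def UTC (A : T.Seq → T.Seq → ℝ) (B : T.Dp → T.Dp → ℝ) : Prop :=
  (∀ (j : T.Dp) (σ' : T.Seq),
      A (T.parentSeq j) σ' + T.Bp B j σ'
        = (∑ σ ∈ T.seqs j, A σ σ') + ∑ j' ∈ T.children σ', B j j')
  ∧ A T.root T.root = 1
  ∧ (∀ σ', σ' ≠ T.root → A T.root σ' = 0)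
  ∧ (∀ σ σ', 0 ≤ A σ σ')
  ∧ (∀ j j', 0 ≤ B j j')

end TFDP

namespace TFDP

variable {T : TFDP}

lemma mem_seqs_of_pd {τ : T.Seq} {jt : T.Dp} (h : T.parentDp τ = some jt) :
    τ ∈ T.seqs jt := (T.parentDp_spec τ jt).mp h

lemma depth_eq_of_pd {τ : T.Seq} {jt : T.Dp} (h : T.parentDp τ = some jt) :
    T.depth τ = T.depth (T.parentSeq jt) + 1 :=
  T.depth_seq jt τ (mem_seqs_of_pd h)

/-- `sB c σ₀ n τ`: τ equals σ₀ or descends from σ₀ following `c` (fuel `n`). -/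
def sB (T : TFDP) (c : T.Dp → T.Seq) (σ₀ : T.Seq) : ℕ → T.Seq → Bool
  | 0, τ => τ = σ₀
  | n+1, τ => (τ = σ₀) ||
      match T.parentDp τ with
      | none => false
      | some jt => (τ = c jt) && T.sB c σ₀ n (T.parentSeq jt)

lemma sB_none {c σ₀} {τ : T.Seq} (h : T.parentDp τ = none) :
    ∀ n, T.sB c σ₀ n τ = decide (τ = σ₀) := by
  intro n; cases n with
  | zero => rfl
  | succ n => simp [sB, h]

lemma sB_succ {c σ₀} {τ : T.Seq} {jt} (h : T.parentDp τ = some jt) (n : ℕ) :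
    T.sB c σ₀ (n+1) τ
      = (decide (τ = σ₀) || (decide (τ = c jt) && T.sB c σ₀ n (T.parentSeq jt))) := by
  simp [sB, h]

lemma sB_eq {c σ₀} : ∀ n m (τ : T.Seq), T.depth τ ≤ n → T.depth τ ≤ m →
    T.sB c σ₀ n τ = T.sB c σ₀ m τ := by
  intro n
  induction n with
  | zero =>
    intro m τ h1 _
    cases hpd : T.parentDp τ with
    | none => rw [sB_none hpd, sB_none hpd]
    | some jt => rw [depth_eq_of_pd hpd] at h1; omega
  | succ n ih =>
    intro m τ h1 h2
    cases hpd : T.parentDp τ with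
    | none => rw [sB_none hpd, sB_none hpd]
    | some jt =>
      have hd := depth_eq_of_pd hpd
      cases m with
      | zero => rw [hd] at h2; omega
      | succ m =>
        rw [sB_succ hpd, sB_succ hpd, ih m (T.parentSeq jt) (by omega) (by omega)]

/-- τ is σ₀ or descends from σ₀ following `c`. -/
def sb (T : TFDP) (c : T.Dp → T.Seq) (σ₀ τ : T.Seq) : Bool := T.sB c σ₀ (T.depth τ) τ

lemma sb_none {c} {σ₀ τ : T.Seq} (h : T.parentDp τ = none) :
    T.sb c σ₀ τ = decide (τ = σ₀) := sB_none h _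

lemma sb_some {c} {σ₀ τ : T.Seq} {jt} (h : T.parentDp τ = some jt) :
    T.sb c σ₀ τ = (decide (τ = σ₀) || (decide (τ = c jt) && T.sb c σ₀ (T.parentSeq jt))) := by
  unfold sb
  rw [depth_eq_of_pd h, sB_succ h]

lemma sb_self {c} (σ₀ : T.Seq) : T.sb c σ₀ σ₀ = true := by
  cases hpd : T.parentDp σ₀ with
  | none => simp [sb_none hpd]
  | some jt => simp [sb_some hpd]

lemma depth_le_of_sb {c} {σ₀ : T.Seq} :
    ∀ n (τ : T.Seq), T.depth τ ≤ n → T.sb c σ₀ τ = true → T.depth σ₀ ≤ T.depth τ := by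
  intro n
  induction n with
  | zero =>
    intro τ h1 h2
    cases hpd : T.parentDp τ with
    | none => rw [sb_none hpd] at h2; simp at h2; exact h2 ▸ le_rfl
    | some jt => rw [depth_eq_of_pd hpd] at h1; omega
  | succ n ih =>
    intro τ h1 h2
    cases hpd : T.parentDp τ with
    | none => rw [sb_none hpd] at h2; simp at h2; exact h2 ▸ le_rfl
    | some jt =>
      rw [sb_some hpd] at h2
      have hd := depth_eq_of_pd hpd
      simp only [Bool.or_eq_true, Bool.and_eq_true, decide_eq_true_eq] at h2
      rcases h2 with h2 | ⟨-, h2⟩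
      · exact h2 ▸ le_rfl
      · have := ih (T.parentSeq jt) (by omega) h2; omega

lemma sb_false_of_depth {c} {σ₀ τ : T.Seq} (h : T.depth τ < T.depth σ₀) :
    T.sb c σ₀ τ = false := by
  cases hcb : T.sb c σ₀ τ with
  | false => rfl
  | true => exact absurd (depth_le_of_sb (T.depth τ) τ le_rfl hcb) (by omega)

lemma sb_congr {c c' : T.Dp → T.Seq} {σ₀ : T.Seq}
    (hcc : ∀ jt, T.depth σ₀ ≤ T.depth (T.parentSeq jt) → c jt = c' jt) :
    ∀ n (τ : T.Seq), T.depth τ ≤ n → T.sb c σ₀ τ = T.sb c' σ₀ τ := by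
  intro n
  induction n with
  | zero =>
    intro τ h1
    cases hpd : T.parentDp τ with
    | none => rw [sb_none hpd, sb_none hpd]
    | some jt => rw [depth_eq_of_pd hpd] at h1; omega
  | succ n ih =>
    intro τ h1
    cases hpd : T.parentDp τ with
    | none => rw [sb_none hpd, sb_none hpd]
    | some jt =>
      have hd := depth_eq_of_pd hpd
      rw [sb_some hpd, sb_some hpd]
      by_cases hdep : T.depth σ₀ ≤ T.depth (T.parentSeq jt)
      · rw [hcc jt hdep, ih (T.parentSeq jt) (by omega)]
      · have h1 : T.sb c σ₀ (T.parentSeq jt) = false := sb_false_of_depth (by omega)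
        have h2 : T.sb c' σ₀ (T.parentSeq jt) = false := sb_false_of_depth (by omega)
        rw [h1, h2]
        simp

end TFDP
namespace TFDP

variable {T : TFDP}

/-- Reachability with active-root set `S`, fuel-based. -/
def rchB (T : TFDP) (S : T.Seq → Bool) (c : T.Dp → T.Seq) : ℕ → T.Seq → Bool
  | 0, τ =>
      match T.parentDp τ with
      | none => S τ
      | some _ => false
  | n+1, τ =>
      match T.parentDp τ with
      | none => S τ
      | some jt => (τ = c jt) && T.rchB S c n (T.parentSeq jt)

lemma rchB_none {S c} {τ : T.Seq} (h : T.parentDp τ = none) :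
    ∀ n, T.rchB S c n τ = S τ := by
  intro n; cases n <;> simp [rchB, h]

lemma rchB_succ {S c} {τ : T.Seq} {jt} (h : T.parentDp τ = some jt) (n : ℕ) :
    T.rchB S c (n+1) τ = (decide (τ = c jt) && T.rchB S c n (T.parentSeq jt)) := by
  simp [rchB, h]

def rch (T : TFDP) (S : T.Seq → Bool) (c : T.Dp → T.Seq) (τ : T.Seq) : Bool :=
  T.rchB S c (T.depth τ) τ

lemma rch_none {S c} {τ : T.Seq} (h : T.parentDp τ = none) : T.rch S c τ = S τ :=
  rchB_none h _

lemma rch_some {S c} {τ : T.Seq} {jt} (h : T.parentDp τ = some jt) :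
    T.rch S c τ = (decide (τ = c jt) && T.rch S c (T.parentSeq jt)) := by
  unfold rch
  rw [depth_eq_of_pd h, rchB_succ h]

lemma rch_congr {S : T.Seq → Bool} {c c' : T.Dp → T.Seq} :
    ∀ n (τ : T.Seq), T.depth τ ≤ n →
      (∀ jt, T.depth (T.parentSeq jt) < T.depth τ → c jt = c' jt) →
      T.rch S c τ = T.rch S c' τ := by
  intro n
  induction n with
  | zero =>
    intro τ h1 hcc
    cases hpd : T.parentDp τ with
    | none => rw [rch_none hpd, rch_none hpd]
    | some jt => rw [depth_eq_of_pd hpd] at h1; omega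
  | succ n ih =>
    intro τ h1 hcc
    cases hpd : T.parentDp τ with
    | none => rw [rch_none hpd, rch_none hpd]
    | some jt =>
      have hd := depth_eq_of_pd hpd
      rw [rch_some hpd, rch_some hpd, hcc jt (by omega),
        ih (T.parentSeq jt) (by omega) (fun jt' h' => hcc jt' (by omega))]

/-- Reroute `c` so that the path towards `σ` is followed. -/
def rtB (T : TFDP) (c : T.Dp → T.Seq) : ℕ → T.Seq → (T.Dp → T.Seq)
  | 0, _ => c
  | n+1, σ =>
      match T.parentDp σ with
      | none => c
      | some jt => Function.update (T.rtB c n (T.parentSeq jt)) jt σ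

def rt (T : TFDP) (c : T.Dp → T.Seq) (σ : T.Seq) : T.Dp → T.Seq :=
  T.rtB c (T.depth σ) σ

lemma rt_none {c} {σ : T.Seq} (h : T.parentDp σ = none) : T.rt c σ = c := by
  unfold rt; cases hd : T.depth σ <;> simp [rtB, h]

lemma rt_some {c} {σ : T.Seq} {jt} (h : T.parentDp σ = some jt) :
    T.rt c σ = Function.update (T.rt c (T.parentSeq jt)) jt σ := by
  unfold rt
  rw [depth_eq_of_pd h]
  simp [rtB, h]

lemma rt_spec {c : T.Dp → T.Seq} :
    ∀ n (σ : T.Seq), T.depth σ ≤ n →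
      ∀ jt, T.depth σ ≤ T.depth (T.parentSeq jt) → T.rt c σ jt = c jt := by
  intro n
  induction n with
  | zero =>
    intro σ h1 jt hjt
    cases hpd : T.parentDp σ with
    | none => rw [rt_none hpd]
    | some jt' => rw [depth_eq_of_pd hpd] at h1; omega
  | succ n ih =>
    intro σ h1 jt hjt
    cases hpd : T.parentDp σ with
    | none => rw [rt_none hpd]
    | some jt' =>
      have hd := depth_eq_of_pd hpd
      rw [rt_some hpd]
      have hne : jt ≠ jt' := by
        intro he; rw [he] at hjt; omega
      rw [Function.update_of_ne hne]
      exact ih (T.parentSeq jt') (by omega) jt (by omega)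

/-- A choice function: one sequence per decision point. -/
def chf (c : T.Dp → T.Seq) : Prop := ∀ jt, c jt ∈ T.seqs jt

lemma chf_rt {c : T.Dp → T.Seq} (hc : T.chf c) :
    ∀ n (σ : T.Seq), T.depth σ ≤ n → T.chf (T.rt c σ) := by
  intro n
  induction n with
  | zero =>
    intro σ h1
    cases hpd : T.parentDp σ with
    | none => rw [rt_none hpd]; exact hc
    | some jt' => rw [depth_eq_of_pd hpd] at h1; omega
  | succ n ih =>
    intro σ h1
    cases hpd : T.parentDp σ with
    | none => rw [rt_none hpd]; exact hc
    | some jt' =>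
      have hd := depth_eq_of_pd hpd
      rw [rt_some hpd]
      intro jt
      by_cases he : jt = jt'
      · subst he; rw [Function.update_self]; exact mem_seqs_of_pd hpd
      · rw [Function.update_of_ne he]
        exact ih (T.parentSeq jt') (by omega) jt

/-- Chain root of a sequence. -/
def chRB (T : TFDP) : ℕ → T.Seq → T.Seq
  | 0, σ => σ
  | n+1, σ =>
      match T.parentDp σ with
      | none => σ
      | some jt => T.chRB n (T.parentSeq jt)

def chR (T : TFDP) (σ : T.Seq) : T.Seq := T.chRB (T.depth σ) σ

lemma chR_none {σ : T.Seq} (h : T.parentDp σ = none) : T.chR σ = σ := by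
  unfold chR; cases hd : T.depth σ <;> simp [chRB, h]

lemma chR_some {σ : T.Seq} {jt} (h : T.parentDp σ = some jt) :
    T.chR σ = T.chR (T.parentSeq jt) := by
  unfold chR
  rw [depth_eq_of_pd h]
  simp [chRB, h]

/-- Rerouting reaches: `rch S (rt c σ) σ = S (chR σ)`. -/
lemma rch_rt {S : T.Seq → Bool} {c : T.Dp → T.Seq} :
    ∀ n (σ : T.Seq), T.depth σ ≤ n → T.rch S (T.rt c σ) σ = S (T.chR σ) := by
  intro n
  induction n with
  | zero =>
    intro σ h1
    cases hpd : T.parentDp σ with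
    | none => rw [rch_none hpd, chR_none hpd]
    | some jt => rw [depth_eq_of_pd hpd] at h1; omega
  | succ n ih =>
    intro σ h1
    cases hpd : T.parentDp σ with
    | none => rw [rch_none hpd, chR_none hpd]
    | some jt =>
      have hd := depth_eq_of_pd hpd
      rw [rch_some hpd, chR_some hpd, rt_some hpd]
      have h2 : T.rch S (Function.update (T.rt c (T.parentSeq jt)) jt σ) (T.parentSeq jt)
          = T.rch S (T.rt c (T.parentSeq jt)) (T.parentSeq jt) := by
        apply rch_congr (T.depth (T.parentSeq jt)) _ le_rfl
        intro jt' h'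
        have hne : jt' ≠ jt := by
          intro he; rw [he] at h'; omega
        rw [Function.update_of_ne hne]
      rw [h2, ih (T.parentSeq jt) (by omega)]
      simp

end TFDP
namespace TFDP

variable {T : TFDP}

lemma pd_root : T.parentDp T.root = none := T.parentDp_root

/-- The pure strategy associated to active-root set `S` and choice function `c`. -/
noncomputable def xsP (T : TFDP) (S : T.Seq → Bool) (c : T.Dp → T.Seq) : T.Seq → ℝ :=
  fun τ => if T.rch S c τ then 1 else 0

lemma xsP_mem {S : T.Seq → Bool} {c : T.Dp → T.Seq} (hS : S T.root = true)
    (hc : T.chf c) : T.xsP S c ∈ T.pureStrats := by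
  refine ⟨⟨fun σ => ?_, ?_, fun j => ?_⟩, fun σ => ?_⟩
  · unfold xsP; positivity
  · unfold xsP
    rw [rch_none pd_root, hS]
    simp
  · have hpsum : ∀ σ ∈ T.seqs j, T.xsP S c σ
        = (if T.rch S c (T.parentSeq j) then if σ = c j then (1:ℝ) else 0 else 0) := by
      intro σ hσ
      have hpd : T.parentDp σ = some j := (T.parentDp_spec σ j).mpr hσ
      unfold xsP
      rw [rch_some hpd]
      cases hb : T.rch S c (T.parentSeq j) <;> by_cases he : σ = c j <;> simp [he, hb]
    rw [Finset.sum_congr rfl hpsum]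
    unfold xsP
    cases hb : T.rch S c (T.parentSeq j) with
    | false => simp
    | true => simp [Finset.sum_ite_eq' (T.seqs j) (c j), hc j]
  · unfold xsP
    cases T.rch S c σ <;> simp

/-- The functional `F v c σ₀ = ⟨v, indicator of the c-subtree at σ₀⟩`. -/
noncomputable def F (T : TFDP) (v : T.Seq → ℝ) (c : T.Dp → T.Seq) (σ₀ : T.Seq) : ℝ :=
  ∑ τ : T.Seq, v τ * (if T.sb c σ₀ τ then 1 else 0)

section Fconst

variable {v : T.Seq → ℝ} {κ : ℝ}
variable (hv : ∀ (S : T.Seq → Bool) (c : T.Dp → T.Seq), S T.root = true → T.chf c →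
    ∑ τ : T.Seq, v τ * T.xsP S c τ = κ)

/-- Pointwise: reachability w.r.t. `{root}` is the `c`-subtree at the root. -/
lemma rch_root_eq_sb {c : T.Dp → T.Seq} :
    ∀ n (τ : T.Seq), T.depth τ ≤ n →
      T.rch (fun τ' => decide (τ' = T.root)) c τ = T.sb c T.root τ := by
  intro n
  induction n with
  | zero =>
    intro τ h1
    cases hpd : T.parentDp τ with
    | none => rw [rch_none hpd, sb_none hpd]
    | some jt => rw [depth_eq_of_pd hpd] at h1; omega
  | succ n ih =>
    intro τ h1
    cases hpd : T.parentDp τ with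
    | none => rw [rch_none hpd, sb_none hpd]
    | some jt =>
      have hd := depth_eq_of_pd hpd
      have hτ : τ ≠ T.root := by
        intro he; rw [he, pd_root] at hpd; exact nomatch hpd
      rw [rch_some hpd, sb_some hpd, ih (T.parentSeq jt) (by omega)]
      simp [hτ]

include hv in
lemma F_root {c : T.Dp → T.Seq} (hc : T.chf c) : T.F v c T.root = κ := by
  have := hv (fun τ' => decide (τ' = T.root)) c (by simp) hc
  rw [← this]
  unfold F xsP
  refine Finset.sum_congr rfl fun τ _ => ?_
  rw [rch_root_eq_sb (T.depth τ) τ le_rfl]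

lemma rch_orphan_eq {c : T.Dp → T.Seq} {σ₀ : T.Seq} (h0 : T.parentDp σ₀ = none)
    (hne : σ₀ ≠ T.root) :
    ∀ n (τ : T.Seq), T.depth τ ≤ n →
      (if T.rch (fun τ' => (decide (τ' = T.root) || decide (τ' = σ₀))) c τ then (1:ℝ) else 0)
        = (if T.rch (fun τ' => decide (τ' = T.root)) c τ then (1:ℝ) else 0)
          + (if T.sb c σ₀ τ then (1:ℝ) else 0) := by
  intro n
  induction n with
  | zero =>
    intro τ h1
    cases hpd : T.parentDp τ with
    | none =>
      rw [rch_none hpd, rch_none hpd, sb_none hpd]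
      by_cases he : τ = σ₀
      · simp [he, hne]
      · simp [he]
    | some jt => rw [depth_eq_of_pd hpd] at h1; omega
  | succ n ih =>
    intro τ h1
    cases hpd : T.parentDp τ with
    | none =>
      rw [rch_none hpd, rch_none hpd, sb_none hpd]
      by_cases he : τ = σ₀
      · simp [he, hne]
      · simp [he]
    | some jt =>
      have hd := depth_eq_of_pd hpd
      have hτ : τ ≠ σ₀ := by
        intro he; rw [he, h0] at hpd; exact nomatch hpd
      rw [rch_some hpd, rch_some hpd, sb_some hpd]
      by_cases he : τ = c jt
      · subst he
        simpa [hτ] using ih (T.parentSeq jt) (by omega)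
      · simp [he, hτ]

include hv in
lemma F_orphan {c : T.Dp → T.Seq} (hc : T.chf c) {σ₀ : T.Seq}
    (h0 : T.parentDp σ₀ = none) (hne : σ₀ ≠ T.root) : T.F v c σ₀ = 0 := by
  have h1 := hv (fun τ' => (decide (τ' = T.root) || decide (τ' = σ₀))) c (by simp) hc
  have h2 := hv (fun τ' => decide (τ' = T.root)) c (by simp) hc
  have h3 : ∑ τ : T.Seq, v τ * T.xsP (fun τ' => (decide (τ' = T.root) || decide (τ' = σ₀))) c τ
      = (∑ τ : T.Seq, v τ * T.xsP (fun τ' => decide (τ' = T.root)) c τ) + T.F v c σ₀ := by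
    unfold F xsP
    rw [← Finset.sum_add_distrib]
    refine Finset.sum_congr rfl fun τ _ => ?_
    rw [← mul_add, rch_orphan_eq h0 hne (T.depth τ) τ le_rfl]
  rw [h1, h2] at h3
  linarith

end Fconst

end TFDP
namespace TFDP

variable {T : TFDP}

lemma E_pointwise {S : T.Seq → Bool} {c0 : T.Dp → T.Seq} {σ' : T.Seq} {j'' : T.Dp}
    (hc0 : T.chf c0) (hσ' : T.parentDp σ' = some j'')
    (hreach : T.rch S c0 (T.parentSeq j'') = true) :
    ∀ n (τ : T.Seq), T.depth τ ≤ n →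
      (if T.rch S (Function.update c0 j'' σ') τ then (1:ℝ) else 0)
          - (if T.rch S c0 τ then (1:ℝ) else 0)
        = (if T.sb c0 σ' τ then (1:ℝ) else 0)
          - (if T.sb c0 (c0 j'') τ then (1:ℝ) else 0) := by
  have hpdc : T.parentDp (c0 j'') = some j'' := (T.parentDp_spec _ j'').mpr (hc0 j'')
  have hdσ' : T.depth σ' = T.depth (T.parentSeq j'') + 1 := depth_eq_of_pd hσ'
  have hdc : T.depth (c0 j'') = T.depth (T.parentSeq j'') + 1 := depth_eq_of_pd hpdc
  intro n
  induction n with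
  | zero =>
    intro τ h1
    cases hpd : T.parentDp τ with
    | none =>
      have hne1 : τ ≠ σ' := by
        intro he; rw [he, hσ'] at hpd; exact nomatch hpd
      have hne2 : τ ≠ c0 j'' := by
        intro he; rw [he, hpdc] at hpd; exact nomatch hpd
      rw [rch_none hpd, rch_none hpd, sb_none hpd, sb_none hpd]
      simp [hne1, hne2]
    | some jt => rw [depth_eq_of_pd hpd] at h1; omega
  | succ n ih =>
    intro τ h1
    cases hpd : T.parentDp τ with
    | none =>
      have hne1 : τ ≠ σ' := by
        intro he; rw [he, hσ'] at hpd; exact nomatch hpd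
      have hne2 : τ ≠ c0 j'' := by
        intro he; rw [he, hpdc] at hpd; exact nomatch hpd
      rw [rch_none hpd, rch_none hpd, sb_none hpd, sb_none hpd]
      simp [hne1, hne2]
    | some jt =>
      have hd := depth_eq_of_pd hpd
      rw [rch_some hpd, rch_some hpd, sb_some hpd, sb_some hpd]
      by_cases hjt : jt = j''
      · subst hjt
        have hupd : T.rch S (Function.update c0 jt σ') (T.parentSeq jt)
            = T.rch S c0 (T.parentSeq jt) := by
          apply rch_congr (T.depth (T.parentSeq jt)) _ le_rfl
          intro jt' h'
          have hne : jt' ≠ jt := by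
            intro he; rw [he] at h'; omega
          rw [Function.update_of_ne hne]
        have hsb1 : T.sb c0 σ' (T.parentSeq jt) = false :=
          sb_false_of_depth (by omega)
        have hsb2 : T.sb c0 (c0 jt) (T.parentSeq jt) = false :=
          sb_false_of_depth (by omega)
        rw [hupd, hreach, Function.update_self, hsb1, hsb2]
        by_cases he1 : τ = σ' <;> by_cases he2 : τ = c0 jt <;> simp [he1, he2]
      · have hcupd : Function.update c0 j'' σ' jt = c0 jt := Function.update_of_ne hjt _ _
        have hne1 : τ ≠ σ' := by
          intro he; rw [he, hσ'] at hpd; exact hjt (Option.some_injective _ hpd.symm ▸ rfl)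
        have hne2 : τ ≠ c0 j'' := by
          intro he; rw [he, hpdc] at hpd; exact hjt (Option.some_injective _ hpd.symm ▸ rfl)
        rw [hcupd]
        by_cases he : τ = c0 jt
        · subst he
          simpa [hne1, hne2] using ih (T.parentSeq jt) (by omega)
        · simp [he, hne1, hne2]

section Fconst

variable {v : T.Seq → ℝ} {κ : ℝ}
variable (hv : ∀ (S : T.Seq → Bool) (c : T.Dp → T.Seq), S T.root = true → T.chf c →
    ∑ τ : T.Seq, v τ * T.xsP S c τ = κ)

include hv in
lemma F_step0 {S : T.Seq → Bool} {c0 : T.Dp → T.Seq} {σ' : T.Seq} {j'' : T.Dp}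
    (hS : S T.root = true) (hc0 : T.chf c0) (hσ' : T.parentDp σ' = some j'')
    (hreach : T.rch S c0 (T.parentSeq j'') = true) :
    T.F v c0 σ' = T.F v c0 (c0 j'') := by
  have hc1 : T.chf (Function.update c0 j'' σ') := by
    intro jt
    by_cases he : jt = j''
    · subst he; rw [Function.update_self]; exact mem_seqs_of_pd hσ'
    · rw [Function.update_of_ne he]; exact hc0 jt
  have h1 := hv S (Function.update c0 j'' σ') hS hc1
  have h2 := hv S c0 hS hc0
  have key : T.F v c0 σ' - T.F v c0 (c0 j'')
      = (∑ τ : T.Seq, v τ * T.xsP S (Function.update c0 j'' σ') τ)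
        - ∑ τ : T.Seq, v τ * T.xsP S c0 τ := by
    unfold F xsP
    rw [← Finset.sum_sub_distrib, ← Finset.sum_sub_distrib]
    refine Finset.sum_congr rfl fun τ _ => ?_
    rw [← mul_sub, ← mul_sub, E_pointwise hc0 hσ' hreach (T.depth τ) τ le_rfl]
  rw [h1, h2, sub_self] at key
  linarith

include hv in
lemma F_step {c : T.Dp → T.Seq} (hc : T.chf c) {σ' : T.Seq} {j'' : T.Dp}
    (hσ' : T.parentDp σ' = some j'') :
    T.F v c σ' = T.F v c (c j'') := by
  set σp := T.parentSeq j'' with hσp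
  set c0 := T.rt c σp with hc0def
  set S : T.Seq → Bool := fun τ => (decide (τ = T.root) || decide (τ = T.chR σp)) with hSdef
  have hS : S T.root = true := by simp [hSdef]
  have hc0 : T.chf c0 := chf_rt hc (T.depth σp) σp le_rfl
  have hreach : T.rch S c0 σp = true := by
    rw [hc0def, rch_rt (T.depth σp) σp le_rfl]
    simp [hSdef]
  have hmain : T.F v c0 σ' = T.F v c0 (c0 j'') := F_step0 hv hS hc0 hσ' hreach
  have hcj : c0 j'' = c j'' := rt_spec (T.depth σp) σp le_rfl j'' le_rfl
  have hdσ' : T.depth σ' = T.depth σp + 1 := depth_eq_of_pd hσ'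
  have hdc : T.depth (c j'') = T.depth σp + 1 :=
    T.depth_seq j'' (c j'') (hc j'')
  have h1 : T.F v c0 σ' = T.F v c σ' := by
    unfold F
    refine Finset.sum_congr rfl fun τ _ => ?_
    rw [sb_congr (fun jt h => (rt_spec (T.depth σp) σp le_rfl jt (by omega)))
      (T.depth τ) τ le_rfl]
  have h2 : T.F v c0 (c j'') = T.F v c (c j'') := by
    unfold F
    refine Finset.sum_congr rfl fun τ _ => ?_
    rw [sb_congr (fun jt h => (rt_spec (T.depth σp) σp le_rfl jt (by omega)))
      (T.depth τ) τ le_rfl]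
  rw [← h1, hmain, hcj, h2]

end Fconst

end TFDP
namespace TFDP

variable {T : TFDP}

lemma depth_children {σ' : T.Seq} {j' : T.Dp} (hj' : j' ∈ T.children σ') {c : T.Dp → T.Seq}
    (hc : T.chf c) : T.depth (c j') = T.depth σ' + 1 := by
  have := T.depth_seq j' (c j') (hc j')
  rwa [(T.mem_children σ' j').mp hj'] at this

lemma sb_expand_pointwise {c : T.Dp → T.Seq} (hc : T.chf c) (σ' : T.Seq) :
    ∀ n (τ : T.Seq), T.depth τ ≤ n →
      (if T.sb c σ' τ then (1:ℝ) else 0)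
        = (if τ = σ' then (1:ℝ) else 0)
          + ∑ j' ∈ T.children σ', (if T.sb c (c j') τ then (1:ℝ) else 0) := by
  intro n
  induction n with
  | zero =>
    intro τ h1
    cases hpd : T.parentDp τ with
    | none =>
      rw [sb_none hpd]
      have hz : ∀ j' ∈ T.children σ', (if T.sb c (c j') τ then (1:ℝ) else 0) = 0 := by
        intro j' _
        have hne : τ ≠ c j' := by
          intro he
          have : T.parentDp τ = some j' := by
            rw [he]; exact (T.parentDp_spec _ j').mpr (hc j')
          rw [hpd] at this; exact nomatch this
        rw [sb_none hpd]
        simp [hne]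
      rw [Finset.sum_eq_zero hz]
      simp
    | some jt => rw [depth_eq_of_pd hpd] at h1; omega
  | succ n ih =>
    intro τ h1
    cases hpd : T.parentDp τ with
    | none =>
      rw [sb_none hpd]
      have hz : ∀ j' ∈ T.children σ', (if T.sb c (c j') τ then (1:ℝ) else 0) = 0 := by
        intro j' _
        have hne : τ ≠ c j' := by
          intro he
          have : T.parentDp τ = some j' := by
            rw [he]; exact (T.parentDp_spec _ j').mpr (hc j')
          rw [hpd] at this; exact nomatch this
        rw [sb_none hpd]
        simp [hne]
      rw [Finset.sum_eq_zero hz]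
      simp
    | some jt =>
      have hd := depth_eq_of_pd hpd
      have hpdall : ∀ j' : T.Dp, T.parentDp (c j') = some j' :=
        fun j' => (T.parentDp_spec _ j').mpr (hc j')
      by_cases hejt : τ = c jt
      · by_cases hps : T.parentSeq jt = σ'
        · -- τ = c jt and jt ∈ children σ'
          have hjtmem : jt ∈ T.children σ' := (T.mem_children σ' jt).mpr hps
          have hdτ : T.depth τ = T.depth σ' + 1 := by rw [hd, hps]
          have hτσ : τ ≠ σ' := by intro he; rw [he] at hdτ; omega
          have hLHS : T.sb c σ' τ = true := by
            rw [sb_some hpd, hps]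
            simp [hejt, sb_self]
          have hsum : ∑ j' ∈ T.children σ', (if T.sb c (c j') τ then (1:ℝ) else 0) = 1 := by
            rw [Finset.sum_eq_single_of_mem jt hjtmem]
            · rw [sb_some hpd]
              simp [hejt]
            · intro j' hj' hne
              have hne1 : τ ≠ c j' := by
                intro he
                have h2 := hpdall j'
                rw [← he, hpd] at h2
                exact hne (Option.some_injective _ h2).symm
              have hne2 : T.sb c (c j') (T.parentSeq jt) = false := by
                apply sb_false_of_depth
                rw [depth_children hj' hc]
                omega
              rw [sb_some hpd, hne2]
              simp [hne1]
          rw [hLHS, hsum]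
          simp [hτσ]
        · -- τ = c jt but jt not a child of σ'
          have hdece : ∀ j' ∈ T.children σ', τ ≠ c j' := by
            intro j' hj' he
            have h2 := hpdall j'
            rw [← he, hpd] at h2
            have : jt = j' := Option.some_injective _ h2
            rw [this] at hps
            exact hps ((T.mem_children σ' j').mp hj')
          by_cases hτσ : τ = σ'
          · have hLHS : T.sb c σ' τ = true := by
              rw [sb_some hpd]
              simp [hτσ]
            have hsum : ∑ j' ∈ T.children σ', (if T.sb c (c j') τ then (1:ℝ) else 0) = 0 := by
              apply Finset.sum_eq_zero
              intro j' hj'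
              have hne2 : T.sb c (c j') (T.parentSeq jt) = false := by
                apply sb_false_of_depth
                rw [depth_children hj' hc]
                rw [hτσ] at hd
                omega
              rw [sb_some hpd, hne2]
              simp [hdece j' hj']
            rw [hLHS, hsum]
            simp [hτσ]
          · have hτσ' : ¬ c jt = σ' := hejt ▸ hτσ
            have hLHS : (if T.sb c σ' τ then (1:ℝ) else 0)
                = (if T.sb c σ' (T.parentSeq jt) then (1:ℝ) else 0) := by
              rw [sb_some hpd]
              simp [hτσ, hejt, hτσ']
            have hsum : ∀ j' ∈ T.children σ',
                (if T.sb c (c j') τ then (1:ℝ) else 0)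
                  = (if T.sb c (c j') (T.parentSeq jt) then (1:ℝ) else 0) := by
              intro j' hj'
              have hd3 : ¬ c jt = c j' := hejt ▸ hdece j' hj'
              rw [sb_some hpd]
              simp [hdece j' hj', hejt, hd3]
            rw [hLHS, Finset.sum_congr rfl hsum, ih (T.parentSeq jt) (by omega)]
            simp [hps, hτσ]
      · -- τ ≠ c jt
        have hLHS : (if T.sb c σ' τ then (1:ℝ) else 0) = (if τ = σ' then (1:ℝ) else 0) := by
          rw [sb_some hpd]
          simp [hejt]
        have hsum : ∑ j' ∈ T.children σ', (if T.sb c (c j') τ then (1:ℝ) else 0) = 0 := by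
          apply Finset.sum_eq_zero
          intro j' hj'
          have hne1 : τ ≠ c j' := by
            intro he
            have h2 := hpdall j'
            rw [← he, hpd] at h2
            have : jt = j' := Option.some_injective _ h2
            rw [← this] at he
            exact hejt he
          rw [sb_some hpd]
          simp [hne1, hejt]
        rw [hLHS, hsum, add_zero]

lemma F_expand {v : T.Seq → ℝ} {c : T.Dp → T.Seq} (hc : T.chf c) (σ' : T.Seq) :
    T.F v c σ' = v σ' + ∑ j' ∈ T.children σ', T.F v c (c j') := by
  unfold F
  have h1 : ∀ τ ∈ (Finset.univ : Finset T.Seq),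
      v τ * (if T.sb c σ' τ then (1:ℝ) else 0)
        = v τ * (if τ = σ' then (1:ℝ) else 0)
          + ∑ j' ∈ T.children σ', v τ * (if T.sb c (c j') τ then (1:ℝ) else 0) := by
    intro τ _
    rw [← Finset.mul_sum, ← mul_add, sb_expand_pointwise hc σ' (T.depth τ) τ le_rfl]
  rw [Finset.sum_congr rfl h1, Finset.sum_add_distrib, Finset.sum_comm]
  congr 1
  simp [Finset.sum_ite_eq Finset.univ σ']

lemma F_zero {v : T.Seq → ℝ} {c : T.Dp → T.Seq} (hc : T.chf c)
    (hA0 : ∀ jt, v (c jt) = 0) :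
    ∀ n (j' : T.Dp), Finset.univ.sup T.depth < T.depth (T.parentSeq j') + n →
      T.F v c (c j') = 0 := by
  intro n
  induction n with
  | zero =>
    intro j' h1
    have := Finset.le_sup (f := T.depth) (Finset.mem_univ (T.parentSeq j'))
    omega
  | succ n ih =>
    intro j' h1
    rw [F_expand hc (c j'), hA0 j']
    have hz : ∀ jb ∈ T.children (c j'), T.F v c (c jb) = 0 := by
      intro jb hjb
      apply ih
      have h2 : T.parentSeq jb = c j' := (T.mem_children _ _).mp hjb
      have h3 : T.depth (c j') = T.depth (T.parentSeq j') + 1 := T.depth_seq j' (c j') (hc j')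
      rw [h2, h3]
      omega
    rw [Finset.sum_eq_zero hz]
    simp

lemma F_zero' {v : T.Seq → ℝ} {c : T.Dp → T.Seq} (hc : T.chf c)
    (hA0 : ∀ jt, v (c jt) = 0) (j' : T.Dp) : T.F v c (c j') = 0 :=
  F_zero hc hA0 (Finset.univ.sup T.depth + 1) j' (by omega)

end TFDP
namespace TFDP

variable {T : TFDP}

lemma sb_mem_form {c : T.Dp → T.Seq} {σ₀ τ : T.Seq} (h : T.sb c σ₀ τ = true) :
    τ = σ₀ ∨ ∃ jt, τ = c jt := by
  cases hpd : T.parentDp τ with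
  | none =>
    rw [sb_none hpd] at h
    simp at h
    exact Or.inl h
  | some jt =>
    rw [sb_some hpd] at h
    simp only [Bool.or_eq_true, Bool.and_eq_true, decide_eq_true_eq] at h
    rcases h with h | ⟨h, -⟩
    · exact Or.inl h
    · exact Or.inr ⟨jt, h⟩

end TFDP

/-- any canonical-row-form matrix `A` representing a linear map `X → co X`
admits a matrix `B` such that `(A, B)` satisfies the UTC constraint system. -/
theorem exists_B_of_canonical (T : TFDP) (A : T.Seq → T.Seq → ℝ)
    (hmap : ∀ x ∈ T.pureStrats, T.mulVec A x ∈ T.poly)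
    (hnn : ∀ σ σ', 0 ≤ A σ σ')
    (hcanon : ∀ (σ : T.Seq) (jt : T.Dp), ∃ σ' ∈ T.seqs jt, A σ σ' = 0) :
    ∃ B : T.Dp → T.Dp → ℝ, T.UTC A B := by
  classical
  obtain ⟨c, hc1, hc2⟩ : ∃ c : T.Seq → T.Dp → T.Seq,
      (∀ σ jt, c σ jt ∈ T.seqs jt) ∧ (∀ σ jt, A σ (c σ jt) = 0) := by
    choose c h1 h2 using hcanon
    exact ⟨c, h1, h2⟩
  have hchf : ∀ σ, T.chf (c σ) := fun σ jt => hc1 σ jt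
  -- row vectors
  set v : T.Dp → T.Seq → ℝ :=
    fun j τ => A (T.parentSeq j) τ - ∑ σ ∈ T.seqs j, A σ τ with hvdef
  -- constancy of the root row
  have hvroot : ∀ (S : T.Seq → Bool) (c' : T.Dp → T.Seq), S T.root = true → T.chf c' →
      ∑ τ : T.Seq, A T.root τ * T.xsP S c' τ = 1 := by
    intro S c' hS hc'
    have hx := TFDP.xsP_mem hS hc'
    have hy := (hmap _ hx).2.1
    exact hy
  -- constancy of the decision-point rows
  have hvj : ∀ (j : T.Dp) (S : T.Seq → Bool) (c' : T.Dp → T.Seq), S T.root = true →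
      T.chf c' → ∑ τ : T.Seq, v j τ * T.xsP S c' τ = 0 := by
    intro j S c' hS hc'
    have hx := TFDP.xsP_mem hS hc'
    have hy := (hmap _ hx).2.2 j
    unfold TFDP.mulVec at hy
    have expand : ∑ τ : T.Seq, v j τ * T.xsP S c' τ
        = (∑ τ : T.Seq, A (T.parentSeq j) τ * T.xsP S c' τ)
          - ∑ σ ∈ T.seqs j, ∑ τ : T.Seq, A σ τ * T.xsP S c' τ := by
      rw [Finset.sum_comm, ← Finset.sum_sub_distrib]
      refine Finset.sum_congr rfl fun τ _ => ?_
      rw [hvdef]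
      rw [sub_mul, Finset.sum_mul]
    rw [expand, hy, sub_eq_zero]
  -- definition of B
  set B : T.Dp → T.Dp → ℝ := fun j j' =>
    ∑ τ : T.Seq, (∑ σ ∈ T.seqs j, A σ τ)
      * (if T.sb (c (T.parentSeq j)) (c (T.parentSeq j) j') τ then (1:ℝ) else 0) with hBdef
  have hBnn : ∀ j j', 0 ≤ B j j' := by
    intro j j'
    apply Finset.sum_nonneg
    intro τ _
    apply mul_nonneg (Finset.sum_nonneg fun σ _ => hnn σ τ)
    positivity
  have hBF : ∀ j j', B j j' = - T.F (v j) (c (T.parentSeq j)) (c (T.parentSeq j) j') := by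
    intro j j'
    have h1 : T.F (v j) (c (T.parentSeq j)) (c (T.parentSeq j) j')
        = (∑ τ : T.Seq, A (T.parentSeq j) τ
            * (if T.sb (c (T.parentSeq j)) (c (T.parentSeq j) j') τ then (1:ℝ) else 0))
          - B j j' := by
      unfold TFDP.F
      rw [hBdef, ← Finset.sum_sub_distrib]
      refine Finset.sum_congr rfl fun τ _ => ?_
      rw [hvdef, sub_mul]
    have h2 : ∑ τ : T.Seq, A (T.parentSeq j) τ
        * (if T.sb (c (T.parentSeq j)) (c (T.parentSeq j) j') τ then (1:ℝ) else 0) = 0 := by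
      apply Finset.sum_eq_zero
      intro τ _
      by_cases hs : T.sb (c (T.parentSeq j)) (c (T.parentSeq j) j') τ = true
      · rcases TFDP.sb_mem_form hs with h | ⟨jt, h⟩
        · rw [h, hc2 (T.parentSeq j) j', zero_mul]
        · rw [h, hc2 (T.parentSeq j) jt, zero_mul]
      · rw [if_neg hs, mul_zero]
    rw [h1, h2]
    ring
  refine ⟨B, ?_, ?_, ?_, hnn, hBnn⟩
  · -- main constraint
    intro j σ'
    have hexp := TFDP.F_expand (hchf (T.parentSeq j)) σ' (v := v j)
    have hFc : ∀ j', T.F (v j) (c (T.parentSeq j)) (c (T.parentSeq j) j') = - B j j' := by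
      intro j'; rw [hBF j j']; ring
    have hsum : ∑ j' ∈ T.children σ', T.F (v j) (c (T.parentSeq j)) (c (T.parentSeq j) j')
        = - ∑ j' ∈ T.children σ', B j j' := by
      rw [← Finset.sum_neg_distrib]
      exact Finset.sum_congr rfl fun j' _ => hFc j'
    rw [hsum] at hexp
    cases hpd : T.parentDp σ' with
    | none =>
      have hF0 : T.F (v j) (c (T.parentSeq j)) σ' = 0 := by
        by_cases hr : σ' = T.root
        · rw [hr]
          exact TFDP.F_root (hvj j) (hchf (T.parentSeq j))
        · exact TFDP.F_orphan (hvj j) (hchf (T.parentSeq j)) hpd hr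
      rw [hF0] at hexp
      have hBp : T.Bp B j σ' = 0 := by
        unfold TFDP.Bp
        rw [hpd]
        rfl
      rw [hBp]
      have : v j σ' = ∑ j' ∈ T.children σ', B j j' := by linarith
      rw [hvdef] at this
      simp only at this
      linarith
    | some j'' =>
      have hF1 : T.F (v j) (c (T.parentSeq j)) σ'
          = T.F (v j) (c (T.parentSeq j)) (c (T.parentSeq j) j'') :=
        TFDP.F_step (hvj j) (hchf (T.parentSeq j)) hpd
      rw [hF1, hFc j''] at hexp
      have hBp : T.Bp B j σ' = B j j'' := by
        unfold TFDP.Bp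
        rw [hpd]
        rfl
      rw [hBp]
      have : v j σ' = (∑ j' ∈ T.children σ', B j j') - B j j'' := by linarith
      rw [hvdef] at this
      simp only at this
      linarith
  · -- A root root = 1
    have hzero : ∀ j', T.F (A T.root) (c T.root) (c T.root j') = 0 :=
      TFDP.F_zero' (hchf T.root) (fun jt => hc2 T.root jt)
    have hexp := TFDP.F_expand (hchf T.root) T.root (v := A T.root)
    have hFr : T.F (A T.root) (c T.root) T.root = 1 :=
      TFDP.F_root hvroot (hchf T.root)
    rw [hFr, Finset.sum_congr rfl (fun j' _ => hzero j')] at hexp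
    simpa using hexp.symm
  · -- A root σ' = 0 off the root
    intro σ' hne
    have hzero : ∀ j', T.F (A T.root) (c T.root) (c T.root j') = 0 :=
      TFDP.F_zero' (hchf T.root) (fun jt => hc2 T.root jt)
    have hexp := TFDP.F_expand (hchf T.root) σ' (v := A T.root)
    have hF0 : T.F (A T.root) (c T.root) σ' = 0 := by
      cases hpd : T.parentDp σ' with
      | none => exact TFDP.F_orphan hvroot (hchf T.root) hpd hne
      | some j'' =>
        rw [TFDP.F_step hvroot (hchf T.root) hpd]
        exact hzero j''
    rw [hF0, Finset.sum_congr rfl (fun j' _ => hzero j')] at hexp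
    simpa using hexp.symm
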